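/- Let X be a nonempty closed L-pseudo-Lipschitz subset of the pseudo-Euclidean space ℝ_{(l,p)} with L < 1 which is C²-regular of dimension k at a point x ∈ X, i.e. there exist an open neighbourhood U of x in ℝ^n, an open set V ⊂ ℝ^k, a point t₀ ∈ V, and a C² map g : V → ℝ^n with g(t₀) = x, g a homeomorphism of V onto X ∩ U, and the differential Dg(t) injective for every t ∈ V. Then x ∉ closure(M_X). -/

import Mathlib

open Filter Topology Set

noncomputable section

/-- The pseudo-Euclidean space `ℝ_{(l,p)}`: `ℝ^(l+p)` with the Euclidean topology. -/
abbrev PE (l p : ℕ) := EuclideanSpace ℝ (Fin (l + p))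

/-- The quadratic form `Q(x) = ‖x‖_l² − ‖x‖_p²`. -/
def Q (l p : ℕ) (x : PE l p) : ℝ :=
  ∑ i : Fin (l + p), if (i : ℕ) < l then (x i) ^ 2 else -((x i) ^ 2)

/-- The pseudo-scalar product `⟪x,y⟫ = Σ_{i<l} x_i y_i − Σ_{i≥l} x_i y_i`. -/
def pseudoInner (l p : ℕ) (x y : PE l p) : ℝ :=
  ∑ i : Fin (l + p), if (i : ℕ) < l then x i * y i else -(x i * y i)

/-- `‖x‖_l`: the Euclidean norm of the first `l` coordinates. -/
def normL (l p : ℕ) (x : PE l p) : ℝ :=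
  Real.sqrt (∑ i : Fin (l + p), if (i : ℕ) < l then (x i) ^ 2 else 0)

/-- `‖x‖_p`: the Euclidean norm of the last `p` coordinates. -/
def normP (l p : ℕ) (x : PE l p) : ℝ :=
  Real.sqrt (∑ i : Fin (l + p), if (i : ℕ) < l then 0 else (x i) ^ 2)

/-- `X` is acausal: `Q(x−y) > 0` for all distinct `x, y ∈ X`. -/
def Acausal (l p : ℕ) (X : Set (PE l p)) : Prop :=
  ∀ x ∈ X, ∀ y ∈ X, x ≠ y → 0 < Q l p (x - y)

/-- `X` is `L`-pseudo-Lipschitz: `L‖x−y‖_l ≥ ‖x−y‖_p` for all `x, y ∈ X`. -/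
def PseudoLipschitz (l p : ℕ) (L : ℝ) (X : Set (PE l p)) : Prop :=
  ∀ x ∈ X, ∀ y ∈ X, normP l p (x - y) ≤ L * normL l p (x - y)

/-- The squared-distance function `ρ(a,X) = inf {Q(x−a) : x ∈ X}`. -/
def rho (l p : ℕ) (X : Set (PE l p)) (a : PE l p) : ℝ :=
  sInf ((fun x => Q l p (x - a)) '' X)

/-- The set of closest points `m(a) = {x ∈ X : Q(x−a) = ρ(a,X)}`, via its equivalent
description `m(a) = {x ∈ X : ∀ b ∈ X, Q(x−a) ≤ Q(b−a)}`. -/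
def mm (l p : ℕ) (X : Set (PE l p)) (a : PE l p) : Set (PE l p) :=
  {x ∈ X | ∀ b ∈ X, Q l p (x - a) ≤ Q l p (b - a)}

/-- The medial axis `M_X`: points with at least two closest points in `X`. -/
def medialAxis (l p : ℕ) (X : Set (PE l p)) : Set (PE l p) :=
  {a | (mm l p X a).Nontrivial}

/-- The vacant axis `W_X`: points with no closest point in `X`. -/
def vacantAxis (l p : ℕ) (X : Set (PE l p)) : Set (PE l p) :=
  {a | mm l p X a = ∅}

/-- The normal set `N(a) = {x : a ∈ m(x)}`. -/
def NN (l p : ℕ) (X : Set (PE l p)) (a : PE l p) : Set (PE l p) :=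
  {x | a ∈ mm l p X x}

/-- The strict normal set `N'(a) = {x : m(x) = {a}}`. -/
def NN' (l p : ℕ) (X : Set (PE l p)) (a : PE l p) : Set (PE l p) :=
  {x | mm l p X x = {a}}

-- ===================== auxiliary lemmas =====================

section Aux

variable {l p : ℕ}

lemma pe_norm_eq_sqrt (u : PE l p) : ‖u‖ = Real.sqrt (∑ i, (u i) ^ 2) := by
  rw [EuclideanSpace.norm_eq]; congr 1
  exact Finset.sum_congr rfl fun i _ => by rw [Real.norm_eq_abs, sq_abs]

lemma pe_norm_sq_eq (u : PE l p) : ‖u‖ ^ 2 = ∑ i, (u i) ^ 2 := by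
  rw [pe_norm_eq_sqrt, Real.sq_sqrt]; positivity

lemma Q_add (u v : PE l p) :
    Q l p (u + v) = Q l p u + 2 * pseudoInner l p u v + Q l p v := by
  simp only [Q, pseudoInner, Finset.mul_sum, ← Finset.sum_add_distrib]
  refine Finset.sum_congr rfl fun i _ => ?_
  have : (u + v) i = u i + v i := rfl
  rw [this]; split <;> ring

lemma pseudoInner_comm (u v : PE l p) :
    pseudoInner l p u v = pseudoInner l p v u := by
  refine Finset.sum_congr rfl fun i _ => by split <;> ring

lemma pseudoInner_add_left (u w v : PE l p) :
    pseudoInner l p (u + w) v = pseudoInner l p u v + pseudoInner l p w v := by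
  simp only [pseudoInner, ← Finset.sum_add_distrib]
  refine Finset.sum_congr rfl fun i _ => ?_
  have : (u + w) i = u i + w i := rfl
  rw [this]; split <;> ring

lemma pseudoInner_abs_le (u v : PE l p) :
    |pseudoInner l p u v| ≤ ‖u‖ * ‖v‖ := by
  have h1 : |pseudoInner l p u v| ≤ ∑ i : Fin (l+p), |u i| * |v i| := by
    refine (Finset.abs_sum_le_sum_abs _ _).trans (Finset.sum_le_sum fun i _ => ?_)
    split <;> simp [abs_mul]
  have h2 := Real.sum_mul_le_sqrt_mul_sqrt Finset.univ (fun i => |u i|) (fun i => |v i|)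
  simp only [sq_abs] at h2
  rw [pe_norm_eq_sqrt, pe_norm_eq_sqrt]
  exact h1.trans h2

lemma Q_eq_norms (u : PE l p) : Q l p u = normL l p u ^ 2 - normP l p u ^ 2 := by
  have hL : normL l p u ^ 2 = ∑ i : Fin (l+p), if (i:ℕ) < l then (u i)^2 else 0 := by
    rw [normL, Real.sq_sqrt]; positivity
  have hP : normP l p u ^ 2 = ∑ i : Fin (l+p), if (i:ℕ) < l then 0 else (u i)^2 := by
    rw [normP, Real.sq_sqrt]; positivity
  rw [Q, hL, hP, ← Finset.sum_sub_distrib]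
  exact Finset.sum_congr rfl fun i _ => by split <;> ring

lemma pe_norm_sq_eq_norms (u : PE l p) : ‖u‖ ^ 2 = normL l p u ^ 2 + normP l p u ^ 2 := by
  have hL : normL l p u ^ 2 = ∑ i : Fin (l+p), if (i:ℕ) < l then (u i)^2 else 0 := by
    rw [normL, Real.sq_sqrt]; positivity
  have hP : normP l p u ^ 2 = ∑ i : Fin (l+p), if (i:ℕ) < l then 0 else (u i)^2 := by
    rw [normP, Real.sq_sqrt]; positivity
  rw [pe_norm_sq_eq, hL, hP, ← Finset.sum_add_distrib]
  exact Finset.sum_congr rfl fun i _ => by split <;> ring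

lemma abs_Q_le (u : PE l p) : |Q l p u| ≤ ‖u‖ ^ 2 := by
  rw [Q_eq_norms, pe_norm_sq_eq_norms]
  have h1 : (0:ℝ) ≤ normL l p u ^ 2 := sq_nonneg _
  have h2 : (0:ℝ) ≤ normP l p u ^ 2 := sq_nonneg _
  rw [abs_le]; constructor <;> nlinarith

/-- The derivative of `Q` at `z`. -/
def Qderiv (l p : ℕ) (z : PE l p) : PE l p →L[ℝ] ℝ :=
  ∑ i : Fin (l + p), ((if (i:ℕ) < l then (1:ℝ) else -1) * (2 * z i)) • (EuclideanSpace.proj i)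

lemma Qderiv_apply (z v : PE l p) : Qderiv l p z v = 2 * pseudoInner l p z v := by
  have hproj : ∀ i : Fin (l+p), EuclideanSpace.proj (𝕜 := ℝ) i v = v i := fun _ => rfl
  simp only [Qderiv, ContinuousLinearMap.sum_apply, ContinuousLinearMap.smul_apply,
    hproj, pseudoInner, Finset.mul_sum, smul_eq_mul]
  refine Finset.sum_congr rfl fun i _ => by split <;> ring

lemma hasFDerivAt_Q (z : PE l p) : HasFDerivAt (Q l p) (Qderiv l p z) z := by
  have key : ∀ i : Fin (l+p),
      HasFDerivAt (fun x : PE l p => if (i:ℕ) < l then (x i)^2 else -((x i)^2))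
      (((if (i:ℕ) < l then (1:ℝ) else -1) * (2 * z i)) • (EuclideanSpace.proj (𝕜 := ℝ) i)) z := by
    intro i
    have hp : HasFDerivAt (fun x : PE l p => x i) (EuclideanSpace.proj (𝕜 := ℝ) i) z :=
      (EuclideanSpace.proj (𝕜 := ℝ) i).hasFDerivAt
    have hsq : HasFDerivAt (fun x : PE l p => (x i)^2)
        ((2 * z i ^ 1) • (EuclideanSpace.proj (𝕜 := ℝ) i)) z :=
      by have h := (hasDerivAt_pow 2 (z i)).comp_hasFDerivAt z hp; norm_num at h ⊢; exact h
    by_cases h : (i:ℕ) < l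
    · simp only [h, if_true]
      convert hsq using 2; ring
    · simp only [h, if_false]
      refine hsq.neg.congr_fderiv ?_
      rw [← neg_smul]; congr 1; ring
  exact HasFDerivAt.fun_sum (fun i (_ : i ∈ Finset.univ) => key i)

end Aux
set_option maxHeartbeats 2000000

/-- pseudo-Euclidean Nash lemma: If a nonempty closed `L`-pseudo-Lipschitz set
`X` (`L < 1`) is `C²`-regular of dimension `k` at `x ∈ X` — i.e. there are an open
neighbourhood `U` of `x`, an open `V ⊂ ℝ^k`, `t₀ ∈ V`, and a `C²` map `g : V → ℝ^n` with
`g t₀ = x`, `g` a homeomorphism of `V` onto `X ∩ U` (with continuous inverse `ginv`), and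
`Dg(t)` injective for every `t ∈ V` — then `x ∉ closure M_X`. -/
theorem nash_lemma_pseudoEuclidean (l p k : ℕ) (hl : 1 ≤ l) (hk : 1 ≤ k)
    (L : ℝ) (hL : L < 1)
    (X : Set (PE l p)) (hne : X.Nonempty) (hX : IsClosed X)
    (hlip : PseudoLipschitz l p L X)
    (x : PE l p) (hx : x ∈ X)
    (U : Set (PE l p)) (hU : IsOpen U) (hxU : x ∈ U)
    (V : Set (EuclideanSpace ℝ (Fin k))) (hV : IsOpen V)
    (t₀ : EuclideanSpace ℝ (Fin k)) (ht₀ : t₀ ∈ V)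
    (g : EuclideanSpace ℝ (Fin k) → PE l p)
    (hg : ContDiffOn ℝ 2 g V) (hgt₀ : g t₀ = x)
    (hgV : g '' V = X ∩ U)
    (ginv : PE l p → EuclideanSpace ℝ (Fin k))
    (hginv : ContinuousOn ginv (X ∩ U)) (hinv : ∀ t ∈ V, ginv (g t) = t)
    (hDg : ∀ t ∈ V, Function.Injective ⇑(fderiv ℝ g t)) :
    x ∉ closure (medialAxis l p X) := by
  classical
  -- STEP 1: quantitative acausality constant c₀
  obtain ⟨c₀, hc₀, hQX⟩ :
      ∃ c₀ > 0, ∀ y ∈ X, ∀ z ∈ X, c₀ * ‖y - z‖ ^ 2 ≤ Q l p (y - z) := by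
    set L' : ℝ := max L 0 with hL'def
    have hL'0 : 0 ≤ L' := le_max_right _ _
    have hL'1 : L' < 1 := max_lt hL one_pos
    refine ⟨(1 - L' ^ 2) / (1 + L' ^ 2), by apply div_pos <;> nlinarith, ?_⟩
    intro y hy z hz
    have h1 : normP l p (y - z) ≤ L' * normL l p (y - z) :=
      (hlip y hy z hz).trans
        (mul_le_mul_of_nonneg_right (le_max_left _ _) (Real.sqrt_nonneg _))
    have h5 : 0 ≤ normL l p (y - z) := Real.sqrt_nonneg _
    have h6 : 0 ≤ normP l p (y - z) := Real.sqrt_nonneg _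
    rw [Q_eq_norms, div_mul_eq_mul_div, div_le_iff₀ (by nlinarith)]
    rw [pe_norm_sq_eq_norms (y - z)]
    nlinarith [sq_nonneg (normL l p (y - z)), sq_nonneg (normP l p (y - z)),
      mul_self_nonneg (L' * normL l p (y - z) - normP l p (y - z))]
  -- STEP 2: injectivity constant cr at t₀
  obtain ⟨cr, hcrpos, hcrD⟩ :
      ∃ cr > 0, ∀ v, cr * ‖v‖ ≤ ‖fderiv ℝ g t₀ v‖ := by
    obtain ⟨K₀, hK₀pos, hK₀⟩ := (fderiv ℝ g t₀).toLinearMap.exists_antilipschitzWith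
        (LinearMap.ker_eq_bot.mpr (hDg t₀ ht₀))
    have hK₀1 : (0:ℝ) < (K₀ : ℝ) + 1 := by positivity
    refine ⟨((K₀ : ℝ) + 1)⁻¹, by positivity, fun v => ?_⟩
    have h1 : ‖v‖ ≤ (K₀ : ℝ) * ‖fderiv ℝ g t₀ v‖ := by
      have := hK₀.le_mul_dist v 0
      simpa [dist_eq_norm] using this
    have h2 : (0:ℝ) ≤ ‖fderiv ℝ g t₀ v‖ := norm_nonneg _
    rw [inv_mul_le_iff₀ hK₀1]
    nlinarith
  -- differentiability of g on V
  have hdiff : ∀ t ∈ V, HasFDerivAt g (fderiv ℝ g t) t := fun t ht =>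
    ((hg.contDiffAt (hV.mem_nhds ht)).differentiableAt (by norm_num)).hasFDerivAt
  -- STEP 3: Lipschitz constant for the derivative near t₀
  obtain ⟨M, hMpos, s, hs, hMlip⟩ :
      ∃ M > (0:ℝ), ∃ s ∈ 𝓝 t₀, ∀ a ∈ s, ∀ b ∈ s,
        ‖fderiv ℝ g a - fderiv ℝ g b‖ ≤ M * ‖a - b‖ := by
    have hgC1 : ContDiffOn ℝ 1 (fderiv ℝ g) V := hg.fderiv_of_isOpen hV (by norm_num)
    obtain ⟨M₀, s, hs, hMs⟩ := (hgC1.contDiffAt (hV.mem_nhds ht₀)).exists_lipschitzOnWith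
    refine ⟨(M₀ : ℝ) + 1, by positivity, s, hs, fun a ha b hb => ?_⟩
    have := hMs.dist_le_mul a ha b hb
    rw [dist_eq_norm, dist_eq_norm] at this
    nlinarith [norm_nonneg (a - b)]
  -- STEP 4: choice of radius r
  obtain ⟨r, hrpos, hrV, hrs, hrM⟩ :
      ∃ r > 0, Metric.closedBall t₀ r ⊆ V ∧ Metric.closedBall t₀ r ⊆ s
        ∧ 3 * M * r ≤ cr / 2 := by
    obtain ⟨r₁, hr₁pos, hr₁⟩ : ∃ r₁ > 0, Metric.closedBall t₀ r₁ ⊆ V ∩ s :=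
      Metric.nhds_basis_closedBall.mem_iff.mp
        (Filter.inter_mem (hV.mem_nhds ht₀) hs)
    refine ⟨min r₁ (cr / (6 * M)), lt_min hr₁pos (by positivity), ?_, ?_, ?_⟩
    · exact fun z hz =>
        (hr₁ (Metric.closedBall_subset_closedBall (min_le_left _ _) hz)).1
    · exact fun z hz =>
        (hr₁ (Metric.closedBall_subset_closedBall (min_le_left _ _) hz)).2
    · have h1 : min r₁ (cr / (6 * M)) ≤ cr / (6 * M) := min_le_right _ _
      have := mul_le_mul_of_nonneg_left h1 (by positivity : (0:ℝ) ≤ 3 * M)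
      calc 3 * M * min r₁ (cr / (6 * M)) ≤ 3 * M * (cr / (6 * M)) := this
        _ = cr / 2 := by field_simp; ring
  -- STEP 5: Taylor estimate on the ball
  have hTaylor : ∀ t₁ ∈ Metric.closedBall t₀ r, ∀ t₂ ∈ Metric.closedBall t₀ r,
      ‖g t₁ - g t₂ - fderiv ℝ g t₂ (t₁ - t₂)‖ ≤ M * ‖t₁ - t₂‖ * ‖t₁ - t₂‖ := by
    intro t₁ h₁ t₂ h₂
    have hseg : segment ℝ t₂ t₁ ⊆ Metric.closedBall t₀ r :=
      (convex_closedBall _ _).segment_subset h₂ h₁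
    refine Convex.norm_image_sub_le_of_norm_hasFDerivWithin_le'
      (f := g) (f' := fun z => fderiv ℝ g z) (φ := fderiv ℝ g t₂)
      (s := segment ℝ t₂ t₁) (C := M * ‖t₁ - t₂‖)
      (fun z hz => (hdiff z (hrV (hseg hz))).hasFDerivWithinAt)
      (fun z hz => ?_) (convex_segment _ _)
      (left_mem_segment ℝ t₂ t₁) (right_mem_segment ℝ t₂ t₁)
    obtain ⟨α, β, hα, hβ, hαβ, rfl⟩ := hz
    have hz2 : α • t₂ + β • t₁ - t₂ = β • (t₁ - t₂) := by
      have : α = 1 - β := by linarith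
      rw [this]; module
    have hlip2 := hMlip _ (hrs (hseg ⟨α, β, hα, hβ, hαβ, rfl⟩)) t₂ (hrs h₂)
    rw [hz2] at hlip2
    have hβ1 : β ≤ 1 := by linarith
    calc ‖fderiv ℝ g (α • t₂ + β • t₁) - fderiv ℝ g t₂‖
        ≤ M * ‖β • (t₁ - t₂)‖ := hlip2
      _ = M * (β * ‖t₁ - t₂‖) := by rw [norm_smul, Real.norm_eq_abs, abs_of_nonneg hβ]
      _ ≤ M * ‖t₁ - t₂‖ := by
          nlinarith [mul_nonneg hMpos.le (norm_nonneg (t₁ - t₂))]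
  -- STEP 6: lower bound on increments of g
  have hLow : ∀ t₁ ∈ Metric.closedBall t₀ r, ∀ t₂ ∈ Metric.closedBall t₀ r,
      (cr / 2) * ‖t₁ - t₂‖ ≤ ‖g t₁ - g t₂‖ := by
    intro t₁ h₁ t₂ h₂
    have hT := hTaylor t₁ h₁ t₂ h₂
    have h2 : cr * ‖t₁ - t₂‖ ≤ ‖fderiv ℝ g t₀ (t₁ - t₂)‖ := hcrD _
    have h3 : ‖fderiv ℝ g t₀ (t₁ - t₂) - fderiv ℝ g t₂ (t₁ - t₂)‖ ≤ (M * r) * ‖t₁ - t₂‖ := by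
      have hb : ‖fderiv ℝ g t₀ - fderiv ℝ g t₂‖ ≤ M * r := by
        have hml := hMlip t₀ (hrs (Metric.mem_closedBall_self hrpos.le)) t₂ (hrs h₂)
        have hd : ‖t₀ - t₂‖ ≤ r := by
          rw [← dist_eq_norm, dist_comm]; exact Metric.mem_closedBall.mp h₂
        nlinarith [norm_nonneg (fderiv ℝ g t₀ - fderiv ℝ g t₂)]
      calc ‖fderiv ℝ g t₀ (t₁ - t₂) - fderiv ℝ g t₂ (t₁ - t₂)‖
          = ‖(fderiv ℝ g t₀ - fderiv ℝ g t₂) (t₁ - t₂)‖ := by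
            rw [ContinuousLinearMap.sub_apply]
        _ ≤ ‖fderiv ℝ g t₀ - fderiv ℝ g t₂‖ * ‖t₁ - t₂‖ :=
            (fderiv ℝ g t₀ - fderiv ℝ g t₂).le_opNorm _
        _ ≤ (M * r) * ‖t₁ - t₂‖ := by nlinarith [norm_nonneg (t₁ - t₂)]
    have h4 : ‖t₁ - t₂‖ ≤ 2 * r := by
      have := dist_triangle t₁ t₀ t₂
      rw [← dist_eq_norm]
      have e1 : dist t₁ t₀ ≤ r := Metric.mem_closedBall.mp h₁
      have e2 : dist t₀ t₂ ≤ r := by rw [dist_comm]; exact Metric.mem_closedBall.mp h₂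
      linarith
    have h5 : ‖fderiv ℝ g t₀ (t₁ - t₂)‖ - ‖fderiv ℝ g t₂ (t₁ - t₂)‖
        ≤ ‖fderiv ℝ g t₀ (t₁ - t₂) - fderiv ℝ g t₂ (t₁ - t₂)‖ := norm_sub_norm_le _ _
    have h6 : ‖fderiv ℝ g t₂ (t₁ - t₂)‖ - ‖g t₁ - g t₂‖
        ≤ ‖g t₁ - g t₂ - fderiv ℝ g t₂ (t₁ - t₂)‖ := by
      have := norm_sub_norm_le (fderiv ℝ g t₂ (t₁ - t₂)) (g t₁ - g t₂)
      have heq : ‖fderiv ℝ g t₂ (t₁ - t₂) - (g t₁ - g t₂)‖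
          = ‖g t₁ - g t₂ - fderiv ℝ g t₂ (t₁ - t₂)‖ := norm_sub_rev _ _
      linarith
    have h7 : M * ‖t₁ - t₂‖ * ‖t₁ - t₂‖ ≤ (2 * M * r) * ‖t₁ - t₂‖ := by
      nlinarith [mul_le_mul_of_nonneg_left h4 (mul_nonneg hMpos.le (norm_nonneg (t₁ - t₂)))]
    nlinarith [mul_le_mul_of_nonneg_right hrM (norm_nonneg (t₁ - t₂))]
  -- STEP 7: first-order condition for minimizers in the chart
  have hFO : ∀ a : PE l p, ∀ t ∈ V, g t ∈ mm l p X a →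
      ∀ v, pseudoInner l p (g t - a) (fderiv ℝ g t v) = 0 := by
    intro a t ht hmem v
    have hminloc : IsLocalMin (fun z => Q l p (g z - a)) t := by
      filter_upwards [hV.mem_nhds ht] with w hw
      have hgw : g w ∈ X := by
        have hmemw : g w ∈ g '' V := mem_image_of_mem g hw
        rw [hgV] at hmemw; exact hmemw.1
      exact hmem.2 (g w) hgw
    have h0 := hminloc.fderiv_eq_zero
    have hQd : HasFDerivAt (fun w => Q l p (w - a)) (Qderiv l p (g t - a)) (g t) := by
      have h1 := hasFDerivAt_Q (l := l) (p := p) (g t - a)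
      have h2 : HasFDerivAt (fun w : PE l p => w - a)
          (ContinuousLinearMap.id ℝ (PE l p)) (g t) := (hasFDerivAt_id (g t)).sub_const a
      have h3 := h1.comp (g t) h2
      rw [ContinuousLinearMap.comp_id] at h3
      exact h3
    have hφ : HasFDerivAt (fun z => Q l p (g z - a))
        ((Qderiv l p (g t - a)).comp (fderiv ℝ g t)) t := hQd.comp t (hdiff t ht)
    have hfd := hφ.fderiv
    rw [h0] at hfd
    have happ := congrArg (fun (f : EuclideanSpace ℝ (Fin k) →L[ℝ] ℝ) => f v) hfd
    simp only [ContinuousLinearMap.zero_apply, ContinuousLinearMap.comp_apply] at happ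
    rw [Qderiv_apply] at happ
    linarith
  -- STEP 8: localization of minimizers (size bound)
  obtain ⟨K', hK'1, hloc1⟩ :
      ∃ K' ≥ (1:ℝ), ∀ δ' > 0, ∀ a : PE l p, dist a x < δ' →
        ∀ y ∈ mm l p X a, ‖y - x‖ ≤ K' * δ' := by
    refine ⟨4 / c₀ + 1, by linarith [div_pos (by norm_num : (0:ℝ) < 4) hc₀], ?_⟩
    intro δ' hδ' a ha y hy
    have hyX : y ∈ X := hy.1
    have hd : ‖x - a‖ < δ' := by rw [← dist_eq_norm, dist_comm]; exact ha
    have hd0 : 0 ≤ ‖x - a‖ := norm_nonneg _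
    have h1 : Q l p (y - a) ≤ Q l p (x - a) := hy.2 x hx
    have h2 : Q l p (x - a) ≤ ‖x - a‖ ^ 2 := (le_abs_self _).trans (abs_Q_le _)
    have h4 : Q l p (y - a) = Q l p (y - x) + 2 * pseudoInner l p (y - x) (x - a)
        + Q l p (x - a) := by
      rw [show y - a = (y - x) + (x - a) by abel, Q_add]
    have h5 : c₀ * ‖y - x‖ ^ 2 ≤ Q l p (y - x) := hQX y hyX x hx
    have h6' := abs_le.mp (pseudoInner_abs_le (y - x) (x - a))
    by_cases hcase : ‖y - x‖ ≤ δ'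
    · calc ‖y - x‖ ≤ δ' := hcase
        _ ≤ (4 / c₀ + 1) * δ' := by nlinarith [div_nonneg (by norm_num : (0:ℝ) ≤ 4) hc₀.le]
    · push_neg at hcase
      have hpos : 0 < ‖y - x‖ := lt_trans hδ' hcase
      have hc4 : c₀ * ‖y - x‖ ≤ 4 * δ' := by nlinarith [norm_nonneg (y - x)]
      have h4c : c₀ * (4 / c₀) = 4 := by field_simp
      nlinarith [mul_pos hc₀ hδ']
  -- STEP 9: chart pull-back for points near x
  obtain ⟨ε, hεpos, hεchart⟩ :
      ∃ ε > 0, ∀ y ∈ X, dist y x < ε →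
        ∃ t ∈ Metric.closedBall t₀ r, t ∈ V ∧ g t = y := by
    have hginvx : ginv x = t₀ := by rw [← hgt₀, hinv t₀ ht₀]
    obtain ⟨ε₁, hε₁pos, hε₁⟩ :=
      (Metric.continuousWithinAt_iff.mp (hginv x ⟨hx, hxU⟩)) r hrpos
    obtain ⟨ε₂, hε₂pos, hε₂⟩ := Metric.isOpen_iff.mp hU x hxU
    refine ⟨min ε₁ ε₂, lt_min hε₁pos hε₂pos, ?_⟩
    intro y hyX hdyx
    have hyU : y ∈ U := hε₂ (Metric.mem_ball.mpr (lt_of_lt_of_le hdyx (min_le_right _ _)))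
    have hyXU : y ∈ X ∩ U := ⟨hyX, hyU⟩
    have hyim : y ∈ g '' V := by rw [hgV]; exact hyXU
    obtain ⟨t, htV, hty⟩ := hyim
    have hginvy : ginv y = t := by rw [← hty, hinv t htV]
    have hdist : dist (ginv y) (ginv x) < r :=
      hε₁ hyXU (lt_of_lt_of_le hdyx (min_le_left _ _))
    rw [hginvy, hginvx] at hdist
    exact ⟨t, Metric.mem_closedBall.mpr hdist.le, htV, hty⟩
  -- STEP 10: choice of δ
  obtain ⟨δ, hδpos, hδε, hδM⟩ :
      ∃ δ > 0, K' * δ < ε ∧ 2 * M * (K' + 1) * δ < c₀ * (cr / 2) ^ 2 := by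
    have hK'pos : (0:ℝ) < K' := by linarith
    refine ⟨min (ε / (2 * (K' + 1))) (c₀ * (cr / 2) ^ 2 / (4 * M * (K' + 1))),
      lt_min (by positivity) (by positivity), ?_, ?_⟩
    · have h1 : min (ε / (2 * (K' + 1))) (c₀ * (cr / 2) ^ 2 / (4 * M * (K' + 1)))
          ≤ ε / (2 * (K' + 1)) := min_le_left _ _
      have h3 : K' * (ε / (2 * (K' + 1))) < ε := by
        rw [div_eq_mul_inv, ← mul_assoc,
          show K' * ε * (2 * (K' + 1))⁻¹ = ε * (K' / (2 * (K' + 1))) by field_simp]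
        have hfrac : K' / (2 * (K' + 1)) < 1 := by
          rw [div_lt_one (by positivity)]; linarith
        nlinarith [mul_lt_mul_of_pos_left hfrac hεpos]
      calc K' * min (ε / (2 * (K' + 1))) (c₀ * (cr / 2) ^ 2 / (4 * M * (K' + 1)))
          ≤ K' * (ε / (2 * (K' + 1))) := mul_le_mul_of_nonneg_left h1 hK'pos.le
        _ < ε := h3
    · have h1 : min (ε / (2 * (K' + 1))) (c₀ * (cr / 2) ^ 2 / (4 * M * (K' + 1)))
          ≤ c₀ * (cr / 2) ^ 2 / (4 * M * (K' + 1)) := min_le_right _ _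
      have h2 : 2 * M * (K' + 1) * (c₀ * (cr / 2) ^ 2 / (4 * M * (K' + 1)))
          = c₀ * (cr / 2) ^ 2 / 2 := by field_simp; ring
      have h4 : 0 < c₀ * (cr / 2) ^ 2 := by positivity
      calc 2 * M * (K' + 1) * min (ε / (2 * (K' + 1))) (c₀ * (cr / 2) ^ 2 / (4 * M * (K' + 1)))
          ≤ 2 * M * (K' + 1) * (c₀ * (cr / 2) ^ 2 / (4 * M * (K' + 1))) :=
            mul_le_mul_of_nonneg_left h1 (by positivity)
        _ = c₀ * (cr / 2) ^ 2 / 2 := h2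
        _ < c₀ * (cr / 2) ^ 2 := by linarith
  -- STEP 11: main argument
  intro hclos
  rw [Metric.mem_closure_iff] at hclos
  obtain ⟨a, haM, hax⟩ := hclos δ hδpos
  obtain ⟨y₁, hy₁, y₂, hy₂, hne12⟩ := haM
  have hax' : dist a x < δ := by rw [dist_comm]; exact hax
  have hR₁ : ‖y₁ - x‖ ≤ K' * δ := hloc1 δ hδpos a hax' y₁ hy₁
  have hR₂ : ‖y₂ - x‖ ≤ K' * δ := hloc1 δ hδpos a hax' y₂ hy₂
  have hd₁ : dist y₁ x < ε := by rw [dist_eq_norm]; exact lt_of_le_of_lt hR₁ hδε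
  have hd₂ : dist y₂ x < ε := by rw [dist_eq_norm]; exact lt_of_le_of_lt hR₂ hδε
  obtain ⟨t₁, ht₁r, ht₁V, hgt₁⟩ := hεchart y₁ hy₁.1 hd₁
  obtain ⟨t₂, ht₂r, ht₂V, hgt₂⟩ := hεchart y₂ hy₂.1 hd₂
  have ht12 : t₁ ≠ t₂ := fun h => hne12 (by rw [← hgt₁, ← hgt₂, h])
  have hvpos : 0 < ‖t₁ - t₂‖ := by
    rw [norm_pos_iff]; exact sub_ne_zero.mpr ht12
  have hQeq : Q l p (y₁ - a) = Q l p (y₂ - a) :=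
    le_antisymm (hy₁.2 y₂ hy₂.1) (hy₂.2 y₁ hy₁.1)
  have hsplit : Q l p (y₁ - a) = Q l p (y₁ - y₂)
      + 2 * pseudoInner l p (y₁ - y₂) (y₂ - a) + Q l p (y₂ - a) := by
    rw [show y₁ - a = (y₁ - y₂) + (y₂ - a) by abel, Q_add]
  have hkey : Q l p (y₁ - y₂) = -(2 * pseudoInner l p (y₁ - y₂) (y₂ - a)) := by linarith
  have hRr : ‖g t₁ - g t₂ - fderiv ℝ g t₂ (t₁ - t₂)‖ ≤ M * ‖t₁ - t₂‖ * ‖t₁ - t₂‖ :=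
    hTaylor t₁ ht₁r t₂ ht₂r
  have hdecomp : y₁ - y₂ = fderiv ℝ g t₂ (t₁ - t₂)
      + (g t₁ - g t₂ - fderiv ℝ g t₂ (t₁ - t₂)) := by
    rw [← hgt₁, ← hgt₂]; abel
  have hFO2 : pseudoInner l p (fderiv ℝ g t₂ (t₁ - t₂)) (y₂ - a) = 0 := by
    have hfo := hFO a t₂ ht₂V (by rw [hgt₂]; exact hy₂) (t₁ - t₂)
    rw [hgt₂] at hfo
    rw [pseudoInner_comm]; exact hfo
  have hPI : pseudoInner l p (y₁ - y₂) (y₂ - a)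
      = pseudoInner l p (g t₁ - g t₂ - fderiv ℝ g t₂ (t₁ - t₂)) (y₂ - a) := by
    rw [hdecomp, pseudoInner_add_left, hFO2, zero_add]
  have hy₂a : ‖y₂ - a‖ ≤ (K' + 1) * δ := by
    have h1 : ‖y₂ - a‖ ≤ ‖y₂ - x‖ + ‖x - a‖ := by
      have := norm_sub_le_norm_sub_add_norm_sub y₂ x a
      linarith
    have h2 : ‖x - a‖ ≤ δ := by
      rw [← dist_eq_norm, dist_comm]; exact hax'.le
    nlinarith
  have hup : |pseudoInner l p (g t₁ - g t₂ - fderiv ℝ g t₂ (t₁ - t₂)) (y₂ - a)|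
      ≤ (M * ‖t₁ - t₂‖ * ‖t₁ - t₂‖) * ((K' + 1) * δ) := by
    refine (pseudoInner_abs_le _ _).trans ?_
    have h0 : (0:ℝ) ≤ ‖y₂ - a‖ := norm_nonneg _
    have h1 : (0:ℝ) ≤ M * ‖t₁ - t₂‖ * ‖t₁ - t₂‖ := by positivity
    exact mul_le_mul hRr hy₂a (norm_nonneg _) h1
  have hQlow : c₀ * ((cr / 2) * ‖t₁ - t₂‖) ^ 2 ≤ Q l p (y₁ - y₂) := by
    have h1 : (cr / 2) * ‖t₁ - t₂‖ ≤ ‖y₁ - y₂‖ := by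
      rw [← hgt₁, ← hgt₂]; exact hLow t₁ ht₁r t₂ ht₂r
    have h2 : c₀ * ((cr / 2) * ‖t₁ - t₂‖) ^ 2 ≤ c₀ * ‖y₁ - y₂‖ ^ 2 := by
      have h3 : (0:ℝ) ≤ (cr / 2) * ‖t₁ - t₂‖ := by positivity
      have h4 : ((cr / 2) * ‖t₁ - t₂‖) ^ 2 ≤ ‖y₁ - y₂‖ ^ 2 := by
        nlinarith [mul_le_mul h1 h1 h3 (norm_nonneg (y₁ - y₂))]
      exact mul_le_mul_of_nonneg_left h4 hc₀.le
    exact h2.trans (hQX y₁ hy₁.1 y₂ hy₂.1)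
  -- contradiction
  have habs := abs_le.mp hup
  have hfinal : c₀ * (cr / 2) ^ 2 * ‖t₁ - t₂‖ ^ 2
      ≤ 2 * M * (K' + 1) * δ * ‖t₁ - t₂‖ ^ 2 := by
    have e1 : c₀ * ((cr / 2) * ‖t₁ - t₂‖) ^ 2 = c₀ * (cr / 2) ^ 2 * ‖t₁ - t₂‖ ^ 2 := by ring
    have e2 : Q l p (y₁ - y₂) ≤ 2 * ((M * ‖t₁ - t₂‖ * ‖t₁ - t₂‖) * ((K' + 1) * δ)) := by
      rw [hkey, hPI]; linarith
    nlinarith [sq_nonneg (‖t₁ - t₂‖)]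
  have hsq : 0 < ‖t₁ - t₂‖ ^ 2 := by positivity
  have hfin2 : c₀ * (cr / 2) ^ 2 ≤ 2 * M * (K' + 1) * δ :=
    le_of_mul_le_mul_right (by nlinarith) hsq
  linarith
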